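/- Let T ∈ M_n(ℤ) be expanding with all of its complex eigenvalues of equal modulus, and let F = F(T,A) be an integral self-affine set containing at least two points. Fix an integer m ≥ 2 and a real c₀ > 0. Then there exist natural numbers α_1, α_2 such that for all integers l, r ≥ 1 and every closed axis-parallel cube C ⊆ ℝ^n of side length c₀·m^{-r}: if c₀·m^{-r} < diam(T^{-l}F) ≤ c₀·m^{-r+1} (commensurability), then the number of vectors a ∈ ℤ^n with T^{-l}(F + a) ∩ C ≠ ∅ is at most α_1·l^{α_2}. Moreover, if T is diagonalizable over ℂ, one can take α_2 = 0, i.e. a bound independent of l and r. -/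

import Mathlib

open Filter MeasureTheory Metric Set Matrix
open scoped Topology ENNReal NNReal

noncomputable section

namespace FracPert

/-- View a plain vector as a point of Euclidean space. -/
def euc {n : ℕ} (v : Fin n → ℝ) : EuclideanSpace ℝ (Fin n) := WithLp.toLp 2 v

/-- The real matrix associated with an integer matrix. -/
def intMat {n : ℕ} (T : Matrix (Fin n) (Fin n) ℤ) : Matrix (Fin n) (Fin n) ℝ :=
  T.map fun x => (x : ℝ)

/-- An integer vector as a real vector. -/
def zVec {n : ℕ} (v : Fin n → ℤ) : Fin n → ℝ := fun i => (v i : ℝ)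

/-- An integer matrix is expanding if all of its complex eigenvalues have modulus `> 1`. -/
def IsExpandingZ {n : ℕ} (T : Matrix (Fin n) (Fin n) ℤ) : Prop :=
  ∀ μ : ℂ, (T.map fun x => (x : ℂ)).charpoly.IsRoot μ → 1 < ‖μ‖

/-- A real matrix is expanding if all of its complex eigenvalues have modulus `> 1`. -/
def IsExpandingR {n : ℕ} (T : Matrix (Fin n) (Fin n) ℝ) : Prop :=
  ∀ μ : ℂ, (T.map fun x => (x : ℂ)).charpoly.IsRoot μ → 1 < ‖μ‖

/-- `F` is the self-affine set generated by the real matrix `M` and the digit set `A`: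
`F` is nonempty, compact, and `F = ⋃_{a ∈ A} M⁻¹ (F + a)`. -/
def IsSelfAffineR {n : ℕ} (M : Matrix (Fin n) (Fin n) ℝ) (A : Set (Fin n → ℝ))
    (F : Set (EuclideanSpace ℝ (Fin n))) : Prop :=
  F.Nonempty ∧ IsCompact F ∧
    F = ⋃ a ∈ A, (fun x : EuclideanSpace ℝ (Fin n) => euc (M⁻¹ *ᵥ (x + euc a))) '' F

/-- Integral self-affine set. -/
def IsSelfAffineZ {n : ℕ} (T : Matrix (Fin n) (Fin n) ℤ) (A : Set (Fin n → ℤ))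
    (F : Set (EuclideanSpace ℝ (Fin n))) : Prop :=
  IsSelfAffineR (intMat T) (zVec '' A) F

/-- The iterated digit sets `A_k = {∑_{i=1}^k T^{k-i} a_i : a_i ∈ A}`. -/
def digitSetIter {n : ℕ} (T : Matrix (Fin n) (Fin n) ℤ) (A : Set (Fin n → ℤ)) (k : ℕ) :
    Set (Fin n → ℤ) :=
  { v | ∃ a : Fin k → Fin n → ℤ, (∀ i, a i ∈ A) ∧
      v = ∑ i : Fin k, (T ^ (k - 1 - (i : ℕ))) *ᵥ a i }

/-- The iterated digit sets for a real matrix. -/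
def digitSetIterR {n : ℕ} (J : Matrix (Fin n) (Fin n) ℝ) (A : Set (Fin n → ℝ)) (k : ℕ) :
    Set (Fin n → ℝ) :=
  { v | ∃ a : Fin k → Fin n → ℝ, (∀ i, a i ∈ A) ∧
      v = ∑ i : Fin k, (J ^ (k - 1 - (i : ℕ))) *ᵥ a i }

/-- The signed floor. -/
def sfloor (t : ℝ) : ℤ := if 0 ≤ t then ⌊t⌋ else -⌊|t|⌋

/-- The signed ceiling. -/
def sceil (t : ℝ) : ℤ := if 0 ≤ t then ⌈t⌉ else -⌈|t|⌉

/-- Entrywise signed floor of a vector. -/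
def sfloorVec {n : ℕ} (v : Fin n → ℝ) : Fin n → ℤ := fun i => sfloor (v i)

/-- The perturbed matrix `T_k`: the entrywise signed ceiling of `J^k`. -/
def pertMat {n : ℕ} (J : Matrix (Fin n) (Fin n) ℝ) (k : ℕ) : Matrix (Fin n) (Fin n) ℤ :=
  Matrix.of fun i j => sceil ((J ^ k) i j)

/-- A real Jordan block for a real eigenvalue: lower triangular, `lam` on the diagonal,
`1` on the subdiagonal. -/
def realJordanBlock (d : ℕ) (lam : ℝ) : Matrix (Fin d) (Fin d) ℝ :=
  Matrix.of fun i j =>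
    if (i : ℕ) = (j : ℕ) then lam else if (i : ℕ) = (j : ℕ) + 1 then 1 else 0

/-- A real Jordan block for a non-real eigenvalue `a + b i`, made of `2 × 2` blocks:
`C = [[a, -b], [b, a]]` on the block diagonal and `I₂` on the block subdiagonal. -/
def complexJordanBlock (m : ℕ) (a b : ℝ) : Matrix (Fin (2 * m)) (Fin (2 * m)) ℝ :=
  Matrix.of fun i j =>
    if (i : ℕ) / 2 = (j : ℕ) / 2 then
      (if (i : ℕ) % 2 = (j : ℕ) % 2 then a else if (i : ℕ) % 2 = 0 then -b else b)
    else if (i : ℕ) / 2 = (j : ℕ) / 2 + 1 then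
      (if (i : ℕ) % 2 = (j : ℕ) % 2 then 1 else 0)
    else 0

/-- `B` is a real Jordan-type block with eigenvalue modulus `ρ` and algebraic multiplicity
`np`. -/
def IsJordanBlock {d : ℕ} (B : Matrix (Fin d) (Fin d) ℝ) (ρ : ℝ) (np : ℕ) : Prop :=
  (d = np ∧ ∃ lam : ℝ, |lam| = ρ ∧ B = realJordanBlock d lam) ∨
  (∃ h : d = 2 * np, ∃ a b : ℝ, b ≠ 0 ∧ Real.sqrt (a ^ 2 + b ^ 2) = ρ ∧
      B = Matrix.reindex (finCongr h).symm (finCongr h).symm (complexJordanBlock np a b))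

/-- The index identification `(Σ p, Fin (d p)) ≃ Fin n` respects the block order
(lexicographic order on the sigma type). -/
def IsJordanArrangement {n s : ℕ} (d : Fin s → ℕ)
    (e : ((p : Fin s) × Fin (d p)) ≃ Fin n) : Prop :=
  ∀ x y : (p : Fin s) × Fin (d p), Sigma.Lex (· < ·) (fun _ => (· < ·)) x y → e x < e y

/-- `J` is a real Jordan-type matrix: a block diagonal matrix with real Jordan-type
blocks whose eigenvalue moduli are `ρ 0 < ρ 1 < ⋯`, all `> 1`. -/
def IsRealJordanLike {n s : ℕ} (J : Matrix (Fin n) (Fin n) ℝ) (ρ : Fin s → ℝ) : Prop :=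
  (∀ p, 1 < ρ p) ∧ StrictMono ρ ∧
  ∃ (d np : Fin s → ℕ) (B : ∀ p, Matrix (Fin (d p)) (Fin (d p)) ℝ)
    (e : ((p : Fin s) × Fin (d p)) ≃ Fin n),
    (∀ p, 0 < np p) ∧ (∀ p, IsJordanBlock (B p) (ρ p) (np p)) ∧
    IsJordanArrangement d e ∧
    J = Matrix.reindex e e (Matrix.blockDiagonal' B)

/-- Perturbation data for an integer matrix `T`: an invertible real matrix `P` such that
`J = P⁻¹ T P` is a real Jordan-type matrix and distinct points of the lattice `P⁻¹ ℤ^n`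
are at distance `> n`. -/
def IsPerturbationData {n s : ℕ} (T : Matrix (Fin n) (Fin n) ℤ)
    (P : Matrix (Fin n) (Fin n) ℝ) (ρ : Fin s → ℝ) : Prop :=
  IsUnit P ∧ IsRealJordanLike (P⁻¹ * intMat T * P) ρ ∧
    ∀ v w : Fin n → ℤ, v ≠ w →
      (n : ℝ) < ‖euc (P⁻¹ *ᵥ zVec v - P⁻¹ *ᵥ zVec w)‖

/-- The digit sets `Ã_k = P⁻¹ A_k`. -/
def tildeDigits {n : ℕ} (T : Matrix (Fin n) (Fin n) ℤ) (A : Set (Fin n → ℤ))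
    (P : Matrix (Fin n) (Fin n) ℝ) (k : ℕ) : Set (Fin n → ℝ) :=
  (fun a => P⁻¹ *ᵥ zVec a) '' digitSetIter T A k

/-- The perturbed digit sets `D_k = ⌊Ã_k⌋±`. -/
def pertDigits {n : ℕ} (T : Matrix (Fin n) (Fin n) ℤ) (A : Set (Fin n → ℤ))
    (P : Matrix (Fin n) (Fin n) ℝ) (k : ℕ) : Set (Fin n → ℤ) :=
  sfloorVec '' tildeDigits T A P k

/-- `N(S, δ)`: the smallest number of sets of diameter at most `δ` needed to cover `S`. -/
def coverNum {n : ℕ} (S : Set (EuclideanSpace ℝ (Fin n))) (δ : ℝ) : ℕ :=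
  sInf { m : ℕ | ∃ C : Fin m → Set (EuclideanSpace ℝ (Fin n)),
    (∀ i, Metric.diam (C i) ≤ δ) ∧ S ⊆ ⋃ i, C i }

/-- The lower box dimension. -/
def lowerBoxDim {n : ℕ} (S : Set (EuclideanSpace ℝ (Fin n))) : ℝ :=
  liminf (fun δ : ℝ => Real.log (coverNum S δ) / Real.log (1 / δ)) (𝓝[>] (0 : ℝ))

/-- The upper box dimension. -/
def upperBoxDim {n : ℕ} (S : Set (EuclideanSpace ℝ (Fin n))) : ℝ :=
  limsup (fun δ : ℝ => Real.log (coverNum S δ) / Real.log (1 / δ)) (𝓝[>] (0 : ℝ))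

/-- The integer lattice `ℤ^n` inside Euclidean space. -/
def intLattice (n : ℕ) : AddSubgroup (EuclideanSpace ℝ (Fin n)) where
  carrier := { v | ∀ i, ∃ m : ℤ, v i = (m : ℝ) }
  zero_mem' := fun i => ⟨0, by simp⟩
  add_mem' := by
    intro a b ha hb i
    obtain ⟨ma, hma⟩ := ha i
    obtain ⟨mb, hmb⟩ := hb i
    exact ⟨ma + mb, by push_cast; rw [← hma, ← hmb]; rfl⟩
  neg_mem' := by
    intro a ha i
    obtain ⟨ma, hma⟩ := ha i
    exact ⟨-ma, by push_cast; rw [← hma]; rfl⟩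

theorem intLattice_isClosed (n : ℕ) :
    IsClosed ((intLattice n : Set (EuclideanSpace ℝ (Fin n)))) := by
  have h : (intLattice n : Set (EuclideanSpace ℝ (Fin n))) =
      ⋂ i, (fun v : EuclideanSpace ℝ (Fin n) => v i) ⁻¹'
        (Set.range (fun m : ℤ => (m : ℝ))) := by
    ext v
    simp only [Set.mem_iInter, Set.mem_preimage, Set.mem_range]
    constructor
    · intro hv i; obtain ⟨m, hm⟩ := hv i; exact ⟨m, hm.symm⟩
    · intro hv i; obtain ⟨m, hm⟩ := hv i; exact ⟨m, hm.symm⟩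
  rw [h]
  exact isClosed_iInter fun i =>
    (Int.isClosedEmbedding_coe_real.isClosed_range).preimage
      (EuclideanSpace.proj (𝕜 := ℝ) i).continuous

/-- The `n`-torus `ℝ^n / ℤ^n` (with the quotient metric). -/
abbrev Torus (n : ℕ) := EuclideanSpace ℝ (Fin n) ⧸ intLattice n

noncomputable instance (n : ℕ) : NormedAddCommGroup (Torus n) :=
  have : IsClosed ((intLattice n : Set (EuclideanSpace ℝ (Fin n)))) := intLattice_isClosed n
  QuotientAddGroup.instNormedAddCommGroup (intLattice n)

instance (n : ℕ) : MeasurableSpace (Torus n) := borel _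
instance (n : ℕ) : BorelSpace (Torus n) := ⟨rfl⟩

/-- The quotient map `ℝ^n → 𝕋^n`. -/
def tproj (n : ℕ) : EuclideanSpace ℝ (Fin n) → Torus n := QuotientAddGroup.mk

/-- Multiplication by a matrix as an additive homomorphism of Euclidean space. -/
def mulVecAddHom {n : ℕ} (M : Matrix (Fin n) (Fin n) ℝ) :
    EuclideanSpace ℝ (Fin n) →+ EuclideanSpace ℝ (Fin n) where
  toFun v := euc (M *ᵥ v)
  map_zero' := by
    show euc (M *ᵥ (0 : Fin n → ℝ)) = 0
    simp [euc]
  map_add' x y := by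
    show euc (M *ᵥ ((x : Fin n → ℝ) + (y : Fin n → ℝ))) = _
    rw [Matrix.mulVec_add]
    rfl

theorem intLattice_le_comap {n : ℕ} (T : Matrix (Fin n) (Fin n) ℤ) :
    intLattice n ≤ (intLattice n).comap (mulVecAddHom (intMat T)) := by
  intro v hv
  intro i
  choose m hm using hv
  refine ⟨∑ j, T i j * m j, ?_⟩
  show (intMat T *ᵥ (v : Fin n → ℝ)) i = _
  simp only [intMat, Matrix.mulVec, dotProduct, Matrix.map_apply]
  push_cast
  refine Finset.sum_congr rfl fun j _ => ?_
  rw [hm j]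

/-- The toral endomorphism induced by an integer matrix `T`, determined by
`φ_T (π x) = π (T x)`. -/
def torusMap {n : ℕ} (T : Matrix (Fin n) (Fin n) ℤ) : Torus n → Torus n :=
  QuotientAddGroup.map (intLattice n) (intLattice n) (mulVecAddHom (intMat T))
    (intLattice_le_comap T)

/-- `μ` is invariant under `f`. -/
def MeasInvariant {α : Type*} [MeasurableSpace α] (f : α → α) (μ : Measure α) : Prop :=
  ∀ B : Set α, MeasurableSet B → μ (f ⁻¹' B) = μ B

/-- `μ` is an ergodic invariant measure for `f`. -/
def MeasErgodic {α : Type*} [MeasurableSpace α] (f : α → α) (μ : Measure α) : Prop :=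
  MeasInvariant f μ ∧ ∀ B : Set α, MeasurableSet B → f ⁻¹' B = B → μ B = 0 ∨ μ B = 1

/-- The (Euclidean) operator norm of a real matrix. -/
def opNorm {n : ℕ} (M : Matrix (Fin n) (Fin n) ℝ) : ℝ :=
  sSup { t : ℝ | ∃ v : EuclideanSpace ℝ (Fin n), ‖v‖ ≤ 1 ∧ t = ‖euc (M *ᵥ v)‖ }

/-- The smallest modulus of a complex eigenvalue of an integer matrix. -/
def minMod {n : ℕ} (M : Matrix (Fin n) (Fin n) ℤ) : ℝ :=
  sInf { r : ℝ | ∃ μ : ℂ, (M.map fun x => (x : ℂ)).charpoly.IsRoot μ ∧ r = ‖μ‖ }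

/-- The largest modulus of a complex eigenvalue of an integer matrix. -/
def maxMod {n : ℕ} (M : Matrix (Fin n) (Fin n) ℤ) : ℝ :=
  sSup { r : ℝ | ∃ μ : ℂ, (M.map fun x => (x : ℂ)).charpoly.IsRoot μ ∧ r = ‖μ‖ }

/-- The cylinder set `T^{-l}(F + a)`. -/
def cylinder {n : ℕ} (T : Matrix (Fin n) (Fin n) ℤ) (l : ℕ) (a : Fin n → ℤ)
    (F : Set (EuclideanSpace ℝ (Fin n))) : Set (EuclideanSpace ℝ (Fin n)) :=
  (fun x : EuclideanSpace ℝ (Fin n) => euc ((intMat T ^ l)⁻¹ *ᵥ (x + euc (zVec a)))) '' F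

/-- The set `T^{-l} F`. -/
def invIter {n : ℕ} (T : Matrix (Fin n) (Fin n) ℤ) (l : ℕ)
    (F : Set (EuclideanSpace ℝ (Fin n))) : Set (EuclideanSpace ℝ (Fin n)) :=
  (fun x : EuclideanSpace ℝ (Fin n) => euc ((intMat T ^ l)⁻¹ *ᵥ x)) '' F

/-- The closed axis-parallel cube with corner `x₀` and side length `σ`. -/
def cubeSet {n : ℕ} (x₀ : Fin n → ℝ) (σ : ℝ) : Set (EuclideanSpace ℝ (Fin n)) :=
  { y | ∀ i, x₀ i ≤ y i ∧ y i ≤ x₀ i + σ }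

/-- The counting bound of STATEMENT 10, with constants `α₁, α₂`. -/
def PieceCountBound {n : ℕ} (T : Matrix (Fin n) (Fin n) ℤ)
    (F : Set (EuclideanSpace ℝ (Fin n))) (m : ℕ) (c₀ : ℝ) (α₁ α₂ : ℕ) : Prop :=
  ∀ l r : ℕ, 1 ≤ l → 1 ≤ r → ∀ x₀ : Fin n → ℝ,
    c₀ * (m : ℝ) ^ (-(r : ℤ)) < Metric.diam (invIter T l F) →
    Metric.diam (invIter T l F) ≤ c₀ * (m : ℝ) ^ (1 - (r : ℤ)) →
    { a : Fin n → ℤ |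
        (cylinder T l a F ∩ cubeSet x₀ (c₀ * (m : ℝ) ^ (-(r : ℤ)))).Nonempty }.Finite ∧
    { a : Fin n → ℤ |
        (cylinder T l a F ∩ cubeSet x₀ (c₀ * (m : ℝ) ^ (-(r : ℤ)))).Nonempty }.ncard ≤
      α₁ * l ^ α₂

section Aux
open Polynomial

/-- coefficient sequence: complete homogeneous recurrences -/
def cf (μ : ℕ → ℂ) : ℕ → ℕ → ℂ
  | 0, 0 => 1
  | 0, _+1 => 0
  | l+1, k => μ k * cf μ l k + (match k with | 0 => 0 | j+1 => cf μ l j)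

lemma cf_zero_zero (μ : ℕ → ℂ) : cf μ 0 0 = 1 := rfl
lemma cf_zero_succ (μ : ℕ → ℂ) (j : ℕ) : cf μ 0 (j+1) = 0 := rfl
lemma cf_succ_zero (μ : ℕ → ℂ) (l : ℕ) : cf μ (l+1) 0 = μ 0 * cf μ l 0 + 0 := rfl
lemma cf_succ_succ (μ : ℕ → ℂ) (l j : ℕ) :
    cf μ (l+1) (j+1) = μ (j+1) * cf μ l (j+1) + cf μ l j := rfl

lemma cf_abs_le {μ : ℕ → ℂ} {lam : ℝ} (hlam : 1 ≤ lam) (hμ : ∀ k, ‖μ k‖ ≤ lam) :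
    ∀ l k, ‖cf μ l k‖ ≤ ((l : ℝ) + 1) ^ k * lam ^ l := by
  intro l
  induction l with
  | zero =>
    intro k
    match k with
    | 0 => simp [cf_zero_zero]

    | j+1 =>
      rw [cf_zero_succ]
      simp only [norm_zero]
      positivity
  | succ l ih =>
    intro k
    have hlampos : (0:ℝ) < lam := lt_of_lt_of_le zero_lt_one hlam
    have hpl : (0:ℝ) ≤ lam ^ l := le_of_lt (pow_pos hlampos l)
    match k with
    | 0 =>
      rw [cf_succ_zero, add_zero, norm_mul]
      calc ‖μ 0‖ * ‖cf μ l 0‖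
          ≤ lam * (((l:ℝ)+1)^0 * lam ^ l) :=
            mul_le_mul (hμ 0) (ih 0) (norm_nonneg _) (le_of_lt hlampos)
        _ = (((l:ℕ)+1 : ℝ)+1)^0 * lam ^ (l+1) := by rw [pow_zero, pow_zero, pow_succ]; ring
        _ = (((l+1 : ℕ) : ℝ)+1)^0 * lam ^ (l+1) := by push_cast; ring
    | j+1 =>
      rw [cf_succ_succ]
      have h1 : ‖μ (j+1) * cf μ l (j+1) + cf μ l j‖
          ≤ ‖μ (j+1)‖ * ‖cf μ l (j+1)‖ + ‖cf μ l j‖ := by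
        refine le_trans (norm_add_le _ _) ?_
        rw [norm_mul]
      have h2 : ‖μ (j+1)‖ * ‖cf μ l (j+1)‖ + ‖cf μ l j‖
          ≤ lam * (((l:ℝ)+1)^(j+1) * lam ^ l) + ((l:ℝ)+1)^j * lam ^ l := by
        refine add_le_add ?_ (ih j)
        exact mul_le_mul (hμ _) (ih _) (norm_nonneg _) (le_of_lt hlampos)
      refine le_trans h1 (le_trans h2 ?_)
      have hx : (1:ℝ) ≤ (l:ℝ) + 1 := by have := Nat.cast_nonneg (α:=ℝ) l; linarith
      have key : ((l:ℝ)+1)^(j+1) + ((l:ℝ)+1)^j ≤ ((l:ℝ)+2)^(j+1) := by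
        have e1 : ((l:ℝ)+2)^(j+1) = ((l:ℝ)+2)^j * ((l:ℝ)+2) := pow_succ _ _
        have e2 : ((l:ℝ)+1)^j ≤ ((l:ℝ)+2)^j := by
          apply pow_le_pow_left₀ (by positivity) (by linarith)
        nlinarith [pow_nonneg (by positivity : (0:ℝ) ≤ (l:ℝ)+1) j,
          pow_succ ((l:ℝ)+1) j]
      have hll : lam ^ l ≤ lam ^ (l+1) := by
        apply pow_le_pow_right₀ hlam (Nat.le_succ l)
      have hfin : lam * (((l:ℝ)+1)^(j+1) * lam ^ l) + ((l:ℝ)+1)^j * lam ^ l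
          ≤ ((l:ℝ)+2)^(j+1) * lam ^ (l+1) := by
        have e3 : lam * (((l:ℝ)+1)^(j+1) * lam ^ l) = ((l:ℝ)+1)^(j+1) * lam ^ (l+1) := by
          rw [pow_succ]; ring
        rw [e3]
        have e4 : ((l:ℝ)+1)^j * lam ^ l ≤ ((l:ℝ)+1)^j * lam ^ (l+1) := by
          apply mul_le_mul_of_nonneg_left hll (by positivity)
        nlinarith [pow_pos hlampos (l+1),
          mul_le_mul_of_nonneg_right key (le_of_lt (pow_pos hlampos (l+1)))]
      refine le_trans hfin ?_
      apply le_of_eq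
      push_cast
      ring


variable {n : ℕ}

def Pseq (M : Matrix (Fin n) (Fin n) ℂ) (μ : ℕ → ℂ) : ℕ → Matrix (Fin n) (Fin n) ℂ
  | 0 => 1
  | k+1 => Pseq M μ k * (M - μ k • 1)

lemma Pseq_comm (M : Matrix (Fin n) (Fin n) ℂ) (μ : ℕ → ℂ) :
    ∀ k, M * Pseq M μ k = Pseq M μ k * M := by
  intro k
  induction k with
  | zero => simp [Pseq]
  | succ k ih =>
    show M * (Pseq M μ k * (M - μ k • 1)) = Pseq M μ k * (M - μ k • 1) * M
    rw [← mul_assoc, ih, mul_assoc, mul_assoc]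
    congr 1
    rw [mul_sub, sub_mul, mul_smul_comm, smul_mul_assoc, one_mul, mul_one]

lemma pow_eq_sum (hn : 0 < n) (M : Matrix (Fin n) (Fin n) ℂ) (μ : ℕ → ℂ)
    (hPn : Pseq M μ n = 0) :
    ∀ l, M ^ l = ∑ k ∈ Finset.range n, cf μ l k • Pseq M μ k := by
  intro l
  induction l with
  | zero =>
    have h : ∀ k, cf μ 0 k • Pseq M μ k
        = if k = 0 then (1 : Matrix (Fin n) (Fin n) ℂ) else 0 := by
      intro k
      match k with
      | 0 => simp [cf_zero_zero, Pseq]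
      | j+1 => simp [cf_zero_succ]
    rw [pow_zero, Finset.sum_congr rfl (fun k _ => h k),
      Finset.sum_ite_eq' (Finset.range n) 0 (fun _ => (1 : Matrix (Fin n) (Fin n) ℂ))]
    simp [Finset.mem_range, hn]
  | succ l ih =>
    have key : ∀ k, M * Pseq M μ k = Pseq M μ (k+1) + μ k • Pseq M μ k := by
      intro k
      have h1 : Pseq M μ (k+1) = Pseq M μ k * M - μ k • Pseq M μ k := by
        show Pseq M μ k * (M - μ k • 1) = _
        rw [mul_sub, mul_smul_comm, mul_one]
      rw [h1, ← Pseq_comm M μ k]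
      abel
    set f : ℕ → Matrix (Fin n) (Fin n) ℂ :=
      fun j => (match j with | 0 => (0:ℂ) | j+1 => cf μ l j) • Pseq M μ j with hf
    have hstep : ∀ k ∈ Finset.range n, M * (cf μ l k • Pseq M μ k)
        = f (k+1) + (μ k * cf μ l k) • Pseq M μ k := by
      intro k _
      rw [mul_smul_comm, key k, smul_add, smul_smul, mul_comm]
    rw [pow_succ', ih, Finset.mul_sum, Finset.sum_congr rfl hstep, Finset.sum_add_distrib]
    have h2 : ∑ k ∈ Finset.range n, f (k+1) = ∑ k ∈ Finset.range n, f k := by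
      have h3 := Finset.sum_range_succ' f n
      have h4 : ∑ k ∈ Finset.range (n+1), f k = ∑ k ∈ Finset.range n, f k := by
        rw [Finset.sum_range_succ]
        have : f n = 0 := by simp only [hf, hPn, smul_zero]
        rw [this, add_zero]
      have h5 : f 0 = 0 := by simp only [hf, zero_smul]
      rw [h4, h5, add_zero] at h3
      exact h3.symm
    rw [h2]
    rw [← Finset.sum_add_distrib]
    apply Finset.sum_congr rfl
    intro k _
    simp only [hf]
    match k with
    | 0 =>
      show (0:ℂ) • Pseq M μ 0 + (μ 0 * cf μ l 0) • Pseq M μ 0 = cf μ (l+1) 0 • Pseq M μ 0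
      rw [cf_succ_zero, add_zero, zero_smul, zero_add]
    | j+1 =>
      show cf μ l j • Pseq M μ (j+1) + (μ (j+1) * cf μ l (j+1)) • Pseq M μ (j+1)
          = cf μ (l+1) (j+1) • Pseq M μ (j+1)
      rw [cf_succ_succ, add_smul, add_comm]

lemma Pseq_entry_le (M : Matrix (Fin n) (Fin n) ℂ) (μ : ℕ → ℂ) (b : ℝ)
    (hb0 : 0 ≤ b) (hb : ∀ k i j, ‖(M - μ k • 1) i j‖ ≤ b) :
    ∀ k i j, ‖Pseq M μ k i j‖ ≤ ((n : ℝ) * b) ^ k := by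
  intro k
  induction k with
  | zero =>
    intro i j
    show ‖(1 : Matrix (Fin n) (Fin n) ℂ) i j‖ ≤ _
    rw [Matrix.one_apply, pow_zero]
    split <;> simp
  | succ k ih =>
    intro i j
    show ‖(Pseq M μ k * (M - μ k • 1)) i j‖ ≤ _
    rw [Matrix.mul_apply]
    calc ‖∑ p, Pseq M μ k i p * (M - μ k • 1) p j‖
        ≤ ∑ p, ‖Pseq M μ k i p * (M - μ k • 1) p j‖ :=
          norm_sum_le _ _
      _ ≤ ∑ _p : Fin n, ((n : ℝ) * b) ^ k * b := by
          apply Finset.sum_le_sum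
          intro p _
          rw [norm_mul]
          exact mul_le_mul (ih i p) (hb k p j) (norm_nonneg _)
            (pow_nonneg (by positivity) _)
      _ = ((n : ℝ) * b) ^ (k+1) := by
          rw [Finset.sum_const, Finset.card_univ, Fintype.card_fin, nsmul_eq_mul, pow_succ]
          ring


lemma Pseq_eq_take_prod (M : Matrix (Fin n) (Fin n) ℂ) (L : List ℂ) :
    ∀ k, k ≤ L.length →
      Pseq M (fun k => L.getD k 0) k = ((L.take k).map (fun a => M - a • 1)).prod := by
  intro k
  induction k with
  | zero => intro _; simp [Pseq]
  | succ k ih =>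
    intro hk
    have hk' : k < L.length := hk
    show Pseq M _ k * (M - L.getD k 0 • 1) = _
    rw [ih (le_of_lt hk'), List.take_succ, List.map_append, List.prod_append]
    rw [List.getElem?_eq_getElem hk']
    simp only [Option.toList_some, List.map_cons, List.map_nil, List.prod_cons, List.prod_nil,
      mul_one]
    rw [List.getD_eq_getElem L 0 hk']

lemma Pseq_roots_eq_zero (M : Matrix (Fin n) (Fin n) ℂ)
    (hlen : M.charpoly.roots.toList.length = n) :
    Pseq M (fun k => M.charpoly.roots.toList.getD k 0) n = 0 := by
  set L := M.charpoly.roots.toList with hL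
  have h1 : Pseq M (fun k => L.getD k 0) n = ((L.map (fun a => M - a • 1)).prod) := by
    rw [Pseq_eq_take_prod M L n (le_of_eq hlen.symm)]
    rw [List.take_of_length_le (le_of_eq hlen)]
  rw [h1]
  have hsplits : M.charpoly.Splits := IsAlgClosed.splits _
  have hprod : M.charpoly = (M.charpoly.roots.map (fun a => X - C a)).prod :=
    hsplits.eq_prod_roots_of_monic (Matrix.charpoly_monic M)
  have hCH := Matrix.aeval_self_charpoly M
  rw [hprod] at hCH
  have hcoe : M.charpoly.roots = (L : Multiset ℂ) := (Multiset.coe_toList _).symm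
  rw [hcoe] at hCH
  rw [Multiset.map_coe, Multiset.prod_coe] at hCH
  rw [map_list_prod (Polynomial.aeval M)] at hCH
  rw [List.map_map] at hCH
  have heq : (⇑(Polynomial.aeval M) ∘ fun a : ℂ => (X : ℂ[X]) - C a)
      = fun a : ℂ => M - a • 1 := by
    funext a
    simp [Algebra.algebraMap_eq_smul_one]
  rw [heq] at hCH
  exact hCH

lemma cpow_entry_bound (hn : 0 < n) (Mc : Matrix (Fin n) (Fin n) ℂ) {lam : ℝ} (hlam : 1 ≤ lam)
    (hroots : ∀ μ : ℂ, Mc.charpoly.IsRoot μ → ‖μ‖ ≤ lam) :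
    ∃ C : ℝ, 0 ≤ C ∧ ∀ (l : ℕ) (i j : Fin n),
      ‖(Mc ^ l) i j‖ ≤ C * ((l : ℝ) + 1) ^ (n-1) * lam ^ l := by
  have hsplits : Mc.charpoly.Splits := IsAlgClosed.splits _
  have hcard : Mc.charpoly.roots.card = n := by
    rw [Polynomial.splits_iff_card_roots.mp hsplits, Matrix.charpoly_natDegree_eq_dim,
      Fintype.card_fin]
  have hlen : Mc.charpoly.roots.toList.length = n := by
    rw [Multiset.length_toList, hcard]
  set L := Mc.charpoly.roots.toList with hLdef
  set μ : ℕ → ℂ := fun k => L.getD k 0 with hμdef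
  have hμ : ∀ k, ‖μ k‖ ≤ lam := by
    intro k
    by_cases hk : k < L.length
    · have hmem : L.getD k 0 ∈ L := by
        rw [List.getD_eq_getElem L 0 hk]
        exact List.getElem_mem hk
      have : L.getD k 0 ∈ Mc.charpoly.roots := (Multiset.mem_toList).mp hmem
      exact hroots _ (Polynomial.mem_roots'.mp this).2
    · have : L.getD k 0 = 0 := List.getD_eq_default L 0 (le_of_not_gt hk)
      rw [hμdef]
      simp only [this, norm_zero]
      linarith
  have hPn : Pseq Mc μ n = 0 := Pseq_roots_eq_zero Mc hlen
  set K : ℝ := (∑ i, ∑ j, ‖Mc i j‖) + lam with hKdef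
  have hK0 : 0 ≤ K := by
    rw [hKdef]
    have : (0:ℝ) ≤ ∑ i, ∑ j, ‖Mc i j‖ := by positivity
    linarith
  have hKb : ∀ k (i j : Fin n), ‖(Mc - μ k • 1) i j‖ ≤ K := by
    intro k i j
    have h1 : (Mc - μ k • 1) i j = Mc i j - μ k * (1 : Matrix (Fin n) (Fin n) ℂ) i j := by
      simp [Matrix.sub_apply, Matrix.smul_apply, smul_eq_mul]
    rw [h1, sub_eq_add_neg]
    refine le_trans (norm_add_le _ _) ?_
    rw [norm_neg, norm_mul]
    have h2 : ‖Mc i j‖ ≤ ∑ i, ∑ j, ‖Mc i j‖ := by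
      refine le_trans ?_ (Finset.single_le_sum (f := fun i => ∑ j, ‖Mc i j‖)
        (fun _ _ => by positivity) (Finset.mem_univ i))
      exact Finset.single_le_sum (fun _ _ => norm_nonneg _) (Finset.mem_univ j)
    have h3 : ‖(1 : Matrix (Fin n) (Fin n) ℂ) i j‖ ≤ 1 := by
      rw [Matrix.one_apply]
      split <;> simp
    have h4 : ‖μ k‖ * ‖(1 : Matrix (Fin n) (Fin n) ℂ) i j‖ ≤ lam := by
      calc ‖μ k‖ * ‖(1 : Matrix (Fin n) (Fin n) ℂ) i j‖
          ≤ lam * 1 := mul_le_mul (hμ k) h3 (norm_nonneg _) (by linarith)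
        _ = lam := mul_one lam
    rw [hKdef]
    linarith
  refine ⟨(n : ℝ) * (1 + (n:ℝ) * K) ^ (n-1), by positivity, ?_⟩
  intro l i j
  rw [pow_eq_sum hn Mc μ hPn l]
  have happ : (∑ k ∈ Finset.range n, cf μ l k • Pseq Mc μ k) i j
      = ∑ k ∈ Finset.range n, cf μ l k * Pseq Mc μ k i j := by
    simp [Matrix.sum_apply, Matrix.smul_apply, smul_eq_mul]
  rw [happ]
  have hbase1 : (1:ℝ) ≤ (l:ℝ) + 1 := by have := Nat.cast_nonneg (α:=ℝ) l; linarith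
  have hbase2 : (1:ℝ) ≤ 1 + (n:ℝ) * K := le_add_of_nonneg_right (by positivity)
  have hlampos : (0:ℝ) < lam := lt_of_lt_of_le zero_lt_one hlam
  calc ‖∑ k ∈ Finset.range n, cf μ l k * Pseq Mc μ k i j‖
      ≤ ∑ k ∈ Finset.range n, ‖cf μ l k * Pseq Mc μ k i j‖ :=
        norm_sum_le _ _
    _ ≤ ∑ _k ∈ Finset.range n, ((l:ℝ)+1)^(n-1) * lam ^ l * (1 + (n:ℝ)*K)^(n-1) := by
        apply Finset.sum_le_sum
        intro k hk
        have hkn : k ≤ n - 1 := by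
          have := Finset.mem_range.mp hk
          omega
        rw [norm_mul]
        have e1 : ‖cf μ l k‖ ≤ ((l:ℝ)+1)^(n-1) * lam ^ l := by
          refine le_trans (cf_abs_le hlam hμ l k) ?_
          have : ((l:ℝ)+1)^k ≤ ((l:ℝ)+1)^(n-1) := pow_le_pow_right₀ hbase1 hkn
          exact mul_le_mul_of_nonneg_right this (le_of_lt (pow_pos hlampos l))
        have e2 : ‖Pseq Mc μ k i j‖ ≤ (1 + (n:ℝ)*K)^(n-1) := by
          refine le_trans (Pseq_entry_le Mc μ K hK0 hKb k i j) ?_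
          calc ((n:ℝ)*K)^k ≤ (1 + (n:ℝ)*K)^k :=
              pow_le_pow_left₀ (by positivity) (by linarith) k
            _ ≤ (1 + (n:ℝ)*K)^(n-1) := pow_le_pow_right₀ hbase2 hkn
        exact mul_le_mul e1 e2 (norm_nonneg _) (by positivity)
    _ = (n : ℝ) * (1 + (n:ℝ) * K) ^ (n-1) * ((l:ℝ)+1)^(n-1) * lam ^ l := by
        rw [Finset.sum_const, Finset.card_range, nsmul_eq_mul]
        ring
  

lemma det_abs_eq (Mc : Matrix (Fin n) (Fin n) ℂ) {lam : ℝ}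
    (hroots : ∀ μ : ℂ, Mc.charpoly.IsRoot μ → ‖μ‖ = lam) :
    ‖Mc.det‖ = lam ^ n := by
  have hsplits : Mc.charpoly.Splits := IsAlgClosed.splits _
  have hcard : Multiset.card Mc.charpoly.roots = n := by
    rw [Polynomial.splits_iff_card_roots.mp hsplits, Matrix.charpoly_natDegree_eq_dim,
      Fintype.card_fin]
  have hprod : Mc.charpoly = (Mc.charpoly.roots.map (fun a => X - C a)).prod :=
    hsplits.eq_prod_roots_of_monic (Matrix.charpoly_monic Mc)
  have hgen : ∀ s : Multiset ℂ, (∀ a ∈ s, ‖a‖ = lam) →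
      ‖(s.map (fun a => Polynomial.eval 0 ((X : ℂ[X]) - C a))).prod‖
        = lam ^ (Multiset.card s) := by
    intro s
    induction s using Multiset.induction with
    | empty => intro _; simp
    | cons a s ih =>
      intro h
      rw [Multiset.map_cons, Multiset.prod_cons, norm_mul, Multiset.card_cons,
        ih (fun b hb => h b (Multiset.mem_cons_of_mem hb)), pow_succ]
      have : Polynomial.eval 0 ((X : ℂ[X]) - C a) = -a := by simp
      rw [this, norm_neg, h a (Multiset.mem_cons_self a s)]
      ring
  have hdet := Matrix.det_eq_sign_charpoly_coeff Mc
  rw [hdet, norm_mul, norm_pow, norm_neg, norm_one, one_pow, one_mul]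
  rw [Polynomial.coeff_zero_eq_eval_zero, hprod, Polynomial.eval_multiset_prod,
    Multiset.map_map]
  have := hgen Mc.charpoly.roots (fun a ha => hroots a (Polynomial.mem_roots'.mp ha).2)
  rw [hcard] at this
  exact this

lemma adjugate_entry_le (B : Matrix (Fin n) (Fin n) ℝ) (b : ℝ) (hb0 : 0 ≤ b)
    (hB : ∀ i j, |B i j| ≤ b) (i j : Fin n) :
    |B.adjugate i j| ≤ (n.factorial : ℝ) * b ^ (n-1) := by
  rw [Matrix.adjugate_apply, Matrix.det_apply]
  refine le_trans (Finset.abs_sum_le_sum_abs _ _) ?_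
  have hterm : ∀ σ : Equiv.Perm (Fin n),
      |Equiv.Perm.sign σ • ∏ c, (B.updateRow j (Pi.single i 1)) (σ c) c| ≤ b ^ (n-1) := by
    intro σ
    have h1 : |Equiv.Perm.sign σ • ∏ c, (B.updateRow j (Pi.single i 1)) (σ c) c|
        = |∏ c, (B.updateRow j (Pi.single i 1)) (σ c) c| := by
      rcases Int.units_eq_one_or (Equiv.Perm.sign σ) with h | h <;> simp [h, Units.smul_def]
    rw [h1, Finset.abs_prod]
    have h2 : ∀ c : Fin n, |(B.updateRow j (Pi.single i 1)) (σ c) c|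
        ≤ if c = σ⁻¹ j then 1 else b := by
      intro c
      by_cases hc : c = σ⁻¹ j
      · have : σ c = j := by rw [hc]; simp
        rw [if_pos hc, this, Matrix.updateRow_self]
        by_cases hci : c = i
        · rw [hci, Pi.single_eq_same]
          simp
        · simp [Pi.single_apply, hci]
      · have : σ c ≠ j := by
          intro hcj
          exact hc (by rw [← hcj]; simp)
        rw [if_neg hc, Matrix.updateRow_ne this]
        exact hB _ _
    refine le_trans (Finset.prod_le_prod (fun c _ => abs_nonneg _) (fun c _ => h2 c)) ?_
    rw [← Finset.prod_erase_mul Finset.univ _ (Finset.mem_univ (σ⁻¹ j))]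
    rw [if_pos rfl, mul_one]
    have h3 : ∀ c ∈ Finset.univ.erase (σ⁻¹ j), (if c = σ⁻¹ j then (1:ℝ) else b) = b := by
      intro c hc
      rw [if_neg (Finset.ne_of_mem_erase hc)]
    rw [Finset.prod_congr rfl h3, Finset.prod_const,
      Finset.card_erase_of_mem (Finset.mem_univ _), Finset.card_univ, Fintype.card_fin]
  refine le_trans (Finset.sum_le_sum (fun σ _ => hterm σ)) ?_
  rw [Finset.sum_const, Finset.card_univ, Fintype.card_perm, Fintype.card_fin, nsmul_eq_mul]

lemma inv_entry_le (B : Matrix (Fin n) (Fin n) ℝ) (b d : ℝ) (hb0 : 0 ≤ b)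
    (hd : |B.det| = d) (hd0 : 0 < d) (hB : ∀ i j, |B i j| ≤ b) (i j : Fin n) :
    |B⁻¹ i j| ≤ (n.factorial : ℝ) * b ^ (n-1) / d := by
  rw [Matrix.inv_def]
  have : (Ring.inverse B.det • B.adjugate) i j = (B.det)⁻¹ * B.adjugate i j := by
    rw [Matrix.smul_apply, Ring.inverse_eq_inv, smul_eq_mul]
  rw [this, abs_mul, abs_inv, hd]
  rw [div_eq_inv_mul]
  exact mul_le_mul_of_nonneg_left (adjugate_entry_le B b hb0 hB i j)
    (inv_nonneg.mpr (le_of_lt hd0))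

lemma intMat_map_eq (T : Matrix (Fin n) (Fin n) ℤ) :
    (intMat T).map Complex.ofRealHom = T.map (fun x => (x : ℂ)) := by
  ext i j
  simp [intMat, Matrix.map_apply]

lemma pow_entry_abs (T : Matrix (Fin n) (Fin n) ℤ) (l : ℕ) (i j : Fin n) :
    |((intMat T) ^ l) i j| = ‖((T.map fun x => (x : ℂ)) ^ l) i j‖ := by
  have h1 : (T.map fun x => (x : ℂ)) ^ l = ((intMat T) ^ l).map Complex.ofRealHom := by
    rw [← intMat_map_eq T, ← RingHom.mapMatrix_apply, ← RingHom.mapMatrix_apply, map_pow]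
  rw [h1, Matrix.map_apply]
  exact ((Complex.norm_real _).trans (Real.norm_eq_abs _)).symm

lemma det_intMat_abs (T : Matrix (Fin n) (Fin n) ℤ) :
    |(intMat T).det| = ‖(T.map fun x => (x : ℂ)).det‖ := by
  rw [← intMat_map_eq T, ← RingHom.mapMatrix_apply, ← RingHom.map_det]
  exact ((Complex.norm_real _).trans (Real.norm_eq_abs _)).symm



/- geometry helpers -/

lemma abs_apply_le_norm (v : EuclideanSpace ℝ (Fin n)) (i : Fin n) : |v i| ≤ ‖v‖ := by
  rw [EuclideanSpace.norm_eq, ← Real.sqrt_sq_eq_abs]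
  apply Real.sqrt_le_sqrt
  calc (v i)^2 = ‖v i‖^2 := by rw [Real.norm_eq_abs, sq_abs]
    _ ≤ ∑ j, ‖v j‖^2 := Finset.single_le_sum (f := fun j => ‖v j‖^2)
      (fun j _ => sq_nonneg _) (Finset.mem_univ i)

lemma norm_le_of_bound (hn : 0 < n) (v : Fin n → ℝ) (b : ℝ) (hb : 0 ≤ b)
    (h : ∀ i, |v i| ≤ b) : ‖euc v‖ ≤ (n : ℝ) * b := by
  have h1 : ∑ i, ‖(euc v) i‖^2 ≤ (n:ℝ) * b^2 := by
    have := Finset.sum_le_card_nsmul Finset.univ (fun i => ‖(euc v) i‖^2) (b^2)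
      (fun i _ => by
        show ‖v i‖^2 ≤ b^2
        rw [Real.norm_eq_abs]
        exact pow_le_pow_left₀ (abs_nonneg _) (h i) 2)
    rwa [Finset.card_univ, Fintype.card_fin, nsmul_eq_mul] at this
  have hn1 : (1:ℝ) ≤ (n:ℝ) := by exact_mod_cast hn
  calc ‖euc v‖ = Real.sqrt (∑ i, ‖(euc v) i‖^2) := EuclideanSpace.norm_eq _
    _ ≤ Real.sqrt ((n:ℝ) * b^2) := Real.sqrt_le_sqrt h1
    _ = Real.sqrt (n:ℝ) * b := by
        rw [Real.sqrt_mul (Nat.cast_nonneg n), Real.sqrt_sq hb]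
    _ ≤ (n:ℝ) * b := by
        refine mul_le_mul_of_nonneg_right ?_ hb
        calc Real.sqrt (n:ℝ) ≤ Real.sqrt ((n:ℝ)^2) := Real.sqrt_le_sqrt (by nlinarith)
          _ = (n:ℝ) := Real.sqrt_sq (Nat.cast_nonneg n)

lemma mulVec_entry_le (M : Matrix (Fin n) (Fin n) ℝ) (v : Fin n → ℝ) (b c : ℝ)
    (hb : 0 ≤ b) (hc : 0 ≤ c) (hM : ∀ i j, |M i j| ≤ b) (hv : ∀ j, |v j| ≤ c) (i : Fin n) :
    |(M *ᵥ v) i| ≤ (n : ℝ) * (b * c) := by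
  have h1 : (M *ᵥ v) i = ∑ j, M i j * v j := rfl
  rw [h1]
  refine le_trans (Finset.abs_sum_le_sum_abs _ _) ?_
  have := Finset.sum_le_card_nsmul Finset.univ (fun j => |M i j * v j|) (b * c)
    (fun j _ => by
      show |M i j * v j| ≤ b * c
      rw [abs_mul]
      exact mul_le_mul (hM i j) (hv j) (abs_nonneg _) hb)
  rwa [Finset.card_univ, Fintype.card_fin, nsmul_eq_mul] at this

lemma main_count {n : ℕ} (hn : 0 < n) (T : Matrix (Fin n) (Fin n) ℤ)
    (F : Set (EuclideanSpace ℝ (Fin n))) (hFc : IsCompact F)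
    (m : ℕ) (hm : 2 ≤ m) (c₀ : ℝ) (hc₀ : 0 < c₀)
    (lam : ℝ) (hlam : 1 ≤ lam)
    (hdet : |(intMat T).det| = lam ^ n)
    (g : ℕ) (C : ℝ) (hC : 0 ≤ C)
    (hpow : ∀ (l : ℕ) (i j : Fin n), |((intMat T) ^ l) i j| ≤ C * ((l:ℝ)+1) ^ g * lam ^ l) :
    ∃ α₁ : ℕ, PieceCountBound T F m c₀ α₁ (g * n * n) := by
  classical
  have hlam0 : 0 < lam := lt_of_lt_of_le zero_lt_one hlam
  have hdF0 : 0 ≤ Metric.diam F := Metric.diam_nonneg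
  have hFb : Bornology.IsBounded F := hFc.isBounded
  set dF := Metric.diam F with hdFdef
  set c₁ : ℝ := (n.factorial : ℝ) * C ^ n with hc₁def
  have hc₁0 : 0 ≤ c₁ := by positivity
  set c₂ : ℝ := ((n:ℝ)^3 * c₁ + 1) * (dF + 1) with hc₂def
  have hc₂0 : 0 ≤ c₂ := by positivity
  set D : ℕ := ⌈c₂⌉₊ with hDdef
  refine ⟨(2 * D * 2^(g*n) + 1)^n, ?_⟩
  intro l r hl hr x₀ hlow _hupp
  have hm0 : (0:ℝ) < (m:ℝ) := by positivity
  set σ : ℝ := c₀ * (m:ℝ) ^ (-(r:ℤ)) with hσdef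
  have hσ0 : 0 < σ := mul_pos hc₀ (zpow_pos hm0 _)
  set B := intMat T ^ l with hBdef
  have hdetB : |B.det| = lam ^ (n*l) := by
    rw [hBdef, Matrix.det_pow, abs_pow, hdet, ← pow_mul]
  have hdetB0 : (0:ℝ) < lam ^ (n*l) := pow_pos hlam0 _
  have hBunit : IsUnit B.det := by
    rw [isUnit_iff_ne_zero]
    intro h
    rw [h, abs_zero] at hdetB
    linarith
  set E : ℝ := C * ((l:ℝ)+1)^g * lam^l with hEdef
  have hE0 : 0 ≤ E := by positivity
  have hEb : ∀ i j, |B i j| ≤ E := fun i j => hpow l i j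
  set G : ℝ := (n.factorial : ℝ) * E^(n-1) / lam^(n*l) with hGdef
  have hG0 : 0 ≤ G := by positivity
  have hGb : ∀ i j, |B⁻¹ i j| ≤ G := fun i j => inv_entry_le B E _ hE0 hdetB hdetB0 hEb i j
  have hl1 : (1:ℝ) ≤ ((l:ℝ)+1)^(g*n) :=
    one_le_pow₀ (by have := Nat.cast_nonneg (α:=ℝ) l; linarith)
  have hEG : E * G ≤ c₁ * ((l:ℝ)+1)^(g*n) := by
    have hn1 : n - 1 + 1 = n := Nat.succ_pred_eq_of_pos hn
    have e0 : E * E^(n-1) = E^n := by rw [← pow_succ' E (n-1), hn1]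
    have e1 : E * G = (n.factorial : ℝ) * E^n / lam^(n*l) := by
      rw [hGdef, ← e0]
      ring
    have e2 : E^n = C^n * ((l:ℝ)+1)^(g*n) * lam^(n*l) := by
      rw [hEdef, mul_pow, mul_pow, ← pow_mul, ← pow_mul, mul_comm l n]
    rw [e1, e2]
    apply le_of_eq
    field_simp
    ring
  -- diameter of invIter bound
  have hdiamInv : Metric.diam (invIter T l F) ≤ (n:ℝ)^2 * G * dF := by
    apply Metric.diam_le_of_forall_dist_le (by positivity)
    rintro u hu v hv
    obtain ⟨x, hx, rfl⟩ := hu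
    obtain ⟨y, hy, rfl⟩ := hv
    have hxy : dist x y ≤ dF := Metric.dist_le_diam_of_mem hFb hx hy
    have hsub : euc (B⁻¹ *ᵥ x) - euc (B⁻¹ *ᵥ y) = euc (B⁻¹ *ᵥ (x - y)) := by
      simp only [euc, Matrix.mulVec_sub, WithLp.toLp_sub]
    rw [dist_eq_norm, ← hBdef, hsub]
    have hcomp : ∀ i, |(B⁻¹ *ᵥ ((x : Fin n → ℝ) - y)) i| ≤ (n:ℝ) * (G * dF) := by
      intro i
      apply mulVec_entry_le B⁻¹ _ G dF hG0 hdF0 hGb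
      intro j
      have : ((x : Fin n → ℝ) - y) j = (x - y) j := rfl
      rw [this]
      calc |(x - y) j| ≤ ‖x - y‖ := abs_apply_le_norm (x - y) j
        _ = dist x y := (dist_eq_norm x y).symm
        _ ≤ dF := hxy
    calc ‖euc (B⁻¹ *ᵥ ((x : Fin n → ℝ) - y))‖ ≤ (n:ℝ) * ((n:ℝ) * (G * dF)) :=
          norm_le_of_bound hn _ _ (by positivity) hcomp
      _ = (n:ℝ)^2 * G * dF := by ring
  have hσle : σ ≤ (n:ℝ)^2 * G * dF := le_trans (le_of_lt hlow) hdiamInv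
  -- membership equation
  have hmemeq : ∀ a : Fin n → ℤ, ∀ y ∈ cylinder T l a F,
      ∃ x ∈ F, ∀ i, (a i : ℝ) = (B *ᵥ (fun j => y j)) i - x i := by
    intro a y hy
    obtain ⟨x, hx, hxy⟩ := hy
    refine ⟨x, hx, ?_⟩
    have h1 : B *ᵥ (B⁻¹ *ᵥ ((fun j => x j) + zVec a)) = B *ᵥ (fun j => y j) := by
      have := congrArg (fun w : EuclideanSpace ℝ (Fin n) => B *ᵥ (fun j => w j)) hxy
      exact this
    rw [Matrix.mulVec_mulVec, Matrix.mul_nonsing_inv _ hBunit, Matrix.one_mulVec] at h1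
    intro i
    have := congrFun h1 i
    have h2 : ((fun j => x j) + zVec a) i = x i + (a i : ℝ) := rfl
    rw [h2] at this
    linarith [this]
  -- key bound on integer coordinates
  have hkey : ∀ a ∈ {a : Fin n → ℤ | (cylinder T l a F ∩ cubeSet x₀ σ).Nonempty},
      ∀ a' ∈ {a : Fin n → ℤ | (cylinder T l a F ∩ cubeSet x₀ σ).Nonempty},
      ∀ i, |(a i : ℝ) - (a' i : ℝ)| ≤ c₂ * ((l:ℝ)+1)^(g*n) := by
    intro a ha a' ha' i
    obtain ⟨y, hycyl, hycube⟩ := ha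
    obtain ⟨y', hycyl', hycube'⟩ := ha'
    obtain ⟨x, hx, hax⟩ := hmemeq a y hycyl
    obtain ⟨x', hx', hax'⟩ := hmemeq a' y' hycyl'
    have hyy' : ∀ j, |(fun j => y j) j - (fun j => y' j) j| ≤ σ := by
      intro j
      have h1 := hycube j
      have h2 := hycube' j
      simp only
      rw [abs_sub_le_iff]
      constructor <;> linarith [h1.1, h1.2, h2.1, h2.2]
    have hBd : |(B *ᵥ ((fun j => y j) - (fun j => y' j))) i| ≤ (n:ℝ) * (E * σ) := by
      apply mulVec_entry_le B _ E σ hE0 (le_of_lt hσ0) hEb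
      intro j
      have : ((fun j => y j) - (fun j => y' j)) j = y j - y' j := rfl
      rw [this]
      exact hyy' j
    have hxx' : |x' i - x i| ≤ dF := by
      calc |x' i - x i| = |(x' - x) i| := rfl
        _ ≤ ‖x' - x‖ := abs_apply_le_norm (x' - x) i
        _ = dist x' x := (dist_eq_norm x' x).symm
        _ ≤ dF := Metric.dist_le_diam_of_mem hFb hx' hx
    have heq : (a i : ℝ) - (a' i : ℝ)
        = (B *ᵥ ((fun j => y j) - (fun j => y' j))) i + (x' i - x i) := by
      rw [hax i, hax' i, Matrix.mulVec_sub, Pi.sub_apply]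
      ring
    rw [heq]
    calc |(B *ᵥ ((fun j => y j) - (fun j => y' j))) i + (x' i - x i)|
        ≤ |(B *ᵥ ((fun j => y j) - (fun j => y' j))) i| + |x' i - x i| := abs_add_le _ _
      _ ≤ (n:ℝ) * (E * σ) + dF := add_le_add hBd hxx'
      _ ≤ (n:ℝ) * (E * ((n:ℝ)^2 * G * dF)) + dF := by
          refine add_le_add_left ?_ dF
          refine mul_le_mul_of_nonneg_left ?_ (Nat.cast_nonneg n)
          exact mul_le_mul_of_nonneg_left hσle hE0
      _ = (n:ℝ)^3 * (E * G) * dF + dF := by ring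
      _ ≤ (n:ℝ)^3 * (c₁ * ((l:ℝ)+1)^(g*n)) * dF + dF := by
          refine add_le_add_left ?_ dF
          refine mul_le_mul_of_nonneg_right ?_ hdF0
          exact mul_le_mul_of_nonneg_left hEG (by positivity)
      _ ≤ c₂ * ((l:ℝ)+1)^(g*n) := by
          rw [hc₂def]
          nlinarith [hl1, hdF0, hc₁0,
            le_mul_of_one_le_right hdF0 hl1,
            mul_nonneg (mul_nonneg (pow_nonneg (Nat.cast_nonneg (α:=ℝ) n) 3) hc₁0)
              (le_trans zero_le_one hl1)]
  -- conclude
  set S := {a : Fin n → ℤ | (cylinder T l a F ∩ cubeSet x₀ σ).Nonempty} with hSdef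
  rcases Set.eq_empty_or_nonempty S with hS | ⟨a₀, ha₀⟩
  · constructor
    · rw [hS]; exact Set.finite_empty
    · rw [hS]; simp
  · set Dn : ℕ := D * (l+1)^(g*n) with hDndef
    have hboundZ : ∀ a ∈ S, ∀ i, a₀ i - (Dn : ℤ) ≤ a i ∧ a i ≤ a₀ i + (Dn : ℤ) := by
      intro a ha i
      have h1 := hkey a ha a₀ ha₀ i
      have h2 : c₂ * ((l:ℝ)+1)^(g*n) ≤ (Dn : ℝ) := by
        rw [hDndef]
        push_cast
        refine mul_le_mul_of_nonneg_right (Nat.le_ceil c₂) ?_ |>.trans ?_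
        · positivity
        · apply le_of_eq; ring
      have h3 : |(a i : ℝ) - (a₀ i : ℝ)| ≤ (Dn : ℝ) := le_trans h1 h2
      have h4 : |a i - a₀ i| ≤ (Dn : ℤ) := by
        have : |((a i - a₀ i : ℤ) : ℝ)| ≤ ((Dn : ℤ) : ℝ) := by push_cast; push_cast at h3; exact h3
        rw [← Int.cast_abs] at this
        exact_mod_cast this
      rw [abs_le] at h4
      omega
    set lo : Fin n → ℤ := fun i => a₀ i - (Dn : ℤ) with hlodef
    set hi : Fin n → ℤ := fun i => a₀ i + (Dn : ℤ) with hhidef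
    have hsub : S ⊆ ↑(Finset.Icc lo hi) := by
      intro a ha
      rw [Finset.coe_Icc, Set.mem_Icc]
      constructor <;> intro i
      · exact (hboundZ a ha i).1
      · exact (hboundZ a ha i).2
    have hfin : S.Finite := Set.Finite.subset (Finset.finite_toSet _) hsub
    refine ⟨hfin, ?_⟩
    have hcard : (Finset.Icc lo hi).card = (2 * Dn + 1)^n := by
      rw [Pi.card_Icc]
      have : ∀ i : Fin n, (Finset.Icc (lo i) (hi i)).card = 2 * Dn + 1 := by
        intro i
        rw [Int.card_Icc]
        have : hi i + 1 - lo i = ((2 * Dn + 1 : ℕ) : ℤ) := by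
          rw [hlodef, hhidef]; push_cast; ring
        rw [this, Int.toNat_natCast]
      rw [Finset.prod_congr rfl (fun i _ => this i), Finset.prod_const, Finset.card_univ,
        Fintype.card_fin]
    calc S.ncard ≤ (↑(Finset.Icc lo hi) : Set (Fin n → ℤ)).ncard :=
          Set.ncard_le_ncard hsub (Finset.finite_toSet _)
      _ = (Finset.Icc lo hi).card := Set.ncard_coe_finset _
      _ = (2 * Dn + 1)^n := hcard
      _ ≤ ((2 * D * 2^(g*n) + 1) * l^(g*n))^n := by
          apply Nat.pow_le_pow_left
          have hlp : 1 ≤ l^(g*n) := Nat.one_le_pow _ _ hl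
          have h5 : (l+1)^(g*n) ≤ 2^(g*n) * l^(g*n) := by
            rw [← Nat.mul_pow]
            exact Nat.pow_le_pow_left (by omega) _
          calc 2 * Dn + 1 = 2 * D * (l+1)^(g*n) + 1 := by rw [hDndef]; ring
            _ ≤ 2 * D * (2^(g*n) * l^(g*n)) + 1 := by
                have := Nat.mul_le_mul_left (2*D) h5
                omega
            _ ≤ 2 * D * 2^(g*n) * l^(g*n) + l^(g*n) := by
                have h6 : 2 * D * (2^(g*n) * l^(g*n)) = 2 * D * 2^(g*n) * l^(g*n) := by ring
                omega
            _ = (2 * D * 2^(g*n) + 1) * l^(g*n) := by ring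
      _ = (2 * D * 2^(g*n) + 1)^n * l^(g*n*n) := by
          rw [Nat.mul_pow, ← pow_mul]
      _ = (2 * D * 2^(g*n) + 1)^n * l^(g*n*n) := rfl


lemma charpoly_eval (M : Matrix (Fin n) (Fin n) ℂ) (x : ℂ) :
    M.charpoly.eval x = (x • (1 : Matrix (Fin n) (Fin n) ℂ) - M).det := by
  rw [Matrix.charpoly]
  have h1 : Polynomial.eval x (Matrix.charmatrix M).det
      = ((Matrix.charmatrix M).map (Polynomial.evalRingHom x)).det :=
    RingHom.map_det (Polynomial.evalRingHom x) (Matrix.charmatrix M)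
  rw [h1]
  congr 1
  ext i j
  by_cases h : i = j
  · subst h
    simp [Matrix.charmatrix_apply_eq, Matrix.map_apply, Matrix.sub_apply, Matrix.smul_apply,
      Matrix.one_apply, smul_eq_mul]
  · simp [Matrix.charmatrix_apply_ne M _ _ h, Matrix.map_apply, Matrix.sub_apply,
      Matrix.smul_apply, Matrix.one_apply, h, smul_eq_mul]

lemma entry_le_double_sum (M : Matrix (Fin n) (Fin n) ℂ) (i j : Fin n) :
    ‖M i j‖ ≤ ∑ i, ∑ j, ‖M i j‖ := by
  refine le_trans ?_ (Finset.single_le_sum (f := fun i => ∑ j, ‖M i j‖)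
    (fun _ _ => by positivity) (Finset.mem_univ i))
  exact Finset.single_le_sum (fun _ _ => norm_nonneg _) (Finset.mem_univ j)

lemma diag_pow_bound (Mc : Matrix (Fin n) (Fin n) ℂ) {lam : ℝ} (hlam : 0 ≤ lam)
    (hroots : ∀ μ : ℂ, Mc.charpoly.IsRoot μ → ‖μ‖ = lam)
    (Q : Matrix (Fin n) (Fin n) ℂ) (hQ : IsUnit Q) (dv : Fin n → ℂ)
    (hdiag : Q⁻¹ * Mc * Q = Matrix.diagonal dv) :
    ∃ C : ℝ, 0 ≤ C ∧ ∀ (l : ℕ) (i j : Fin n), ‖(Mc ^ l) i j‖ ≤ C * lam ^ l := by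
  have hQdet : IsUnit Q.det := (Matrix.isUnit_iff_isUnit_det Q).mp hQ
  have hQQ : Q * Q⁻¹ = 1 := Matrix.mul_nonsing_inv _ hQdet
  have hQQ' : Q⁻¹ * Q = 1 := Matrix.nonsing_inv_mul _ hQdet
  have hMc : Mc = Q * Matrix.diagonal dv * Q⁻¹ := by
    rw [← hdiag]
    rw [show Q * (Q⁻¹ * Mc * Q) * Q⁻¹ = (Q * Q⁻¹) * Mc * (Q * Q⁻¹) by
      simp only [Matrix.mul_assoc]]
    rw [hQQ, Matrix.one_mul, Matrix.mul_one]
  have hdvroot : ∀ p, ‖dv p‖ = lam := by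
    intro p
    apply hroots
    show Mc.charpoly.eval (dv p) = 0
    rw [charpoly_eval]
    have e1 : Q * (dv p • (1 : Matrix (Fin n) (Fin n) ℂ)) * Q⁻¹
        = dv p • (1 : Matrix (Fin n) (Fin n) ℂ) := by
      rw [mul_smul_comm, Matrix.mul_one, smul_mul_assoc, hQQ]
    have h2 : Q * (dv p • (1 : Matrix (Fin n) (Fin n) ℂ) - Matrix.diagonal dv) * Q⁻¹
        = dv p • (1 : Matrix (Fin n) (Fin n) ℂ) - Mc := by
      rw [Matrix.mul_sub, Matrix.sub_mul, e1, ← hMc]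
    have h3 : (dv p • (1 : Matrix (Fin n) (Fin n) ℂ) - Matrix.diagonal dv).det = 0 := by
      rw [Matrix.smul_one_eq_diagonal, Matrix.diagonal_sub, Matrix.det_diagonal]
      exact Finset.prod_eq_zero (Finset.mem_univ p) (by simp)
    rw [← h2, Matrix.det_mul, Matrix.det_mul, h3, mul_zero, zero_mul]
  have hconj : ∀ l, Mc ^ l = Q * (Matrix.diagonal dv) ^ l * Q⁻¹ := by
    intro l
    induction l with
    | zero => rw [pow_zero, pow_zero, Matrix.mul_one, hQQ]
    | succ l ih =>
      calc Mc ^ (l+1) = (Q * (Matrix.diagonal dv)^l * Q⁻¹) * (Q * Matrix.diagonal dv * Q⁻¹) := by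
            rw [pow_succ, ih, ← hMc]
        _ = Q * ((Matrix.diagonal dv)^l * ((Q⁻¹ * Q) * (Matrix.diagonal dv * Q⁻¹))) := by
            simp only [Matrix.mul_assoc]
        _ = Q * (Matrix.diagonal dv)^(l+1) * Q⁻¹ := by
            rw [hQQ', Matrix.one_mul, pow_succ]
            simp only [Matrix.mul_assoc]
  have hentry : ∀ (l : ℕ) (i j : Fin n), (Mc ^ l) i j = ∑ p, Q i p * (dv p)^l * Q⁻¹ p j := by
    intro l i j
    rw [hconj l, Matrix.diagonal_pow, Matrix.mul_apply]
    apply Finset.sum_congr rfl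
    intro p _
    rw [Matrix.mul_diagonal]
    congr
  set qb := ∑ i, ∑ j, ‖Q i j‖ with hqb
  set qb' := ∑ i, ∑ j, ‖Q⁻¹ i j‖ with hqb'
  have hqb0 : 0 ≤ qb := by positivity
  have hqb'0 : 0 ≤ qb' := by positivity
  refine ⟨(n : ℝ) * (qb * qb'), by positivity, ?_⟩
  intro l i j
  rw [hentry l i j]
  refine le_trans (norm_sum_le _ _) ?_
  have := Finset.sum_le_card_nsmul Finset.univ
    (fun p => ‖Q i p * (dv p)^l * Q⁻¹ p j‖) (qb * lam^l * qb')
    (fun p _ => by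
      show ‖Q i p * (dv p)^l * Q⁻¹ p j‖ ≤ qb * lam^l * qb'
      rw [norm_mul, norm_mul, norm_pow, hdvroot p]
      exact mul_le_mul (mul_le_mul (entry_le_double_sum Q i p) le_rfl
        (pow_nonneg hlam l) hqb0) (entry_le_double_sum Q⁻¹ p j) (norm_nonneg _)
        (mul_nonneg hqb0 (pow_nonneg hlam l)))
  rw [Finset.card_univ, Fintype.card_fin, nsmul_eq_mul] at this
  calc (∑ p, ‖Q i p * (dv p)^l * Q⁻¹ p j‖) ≤ (n:ℝ) * (qb * lam^l * qb') := this
    _ = (n:ℝ) * (qb * qb') * lam ^ l := by ring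



end Aux

/-- bound on the number of commensurable cylinders meeting a mesh cube. -/
theorem count_commensurable_pieces {n : ℕ} (T : Matrix (Fin n) (Fin n) ℤ)
    (A : Finset (Fin n → ℤ)) (hT : IsExpandingZ T)
    (heq : ∀ μ ν : ℂ, (T.map fun x => (x : ℂ)).charpoly.IsRoot μ →
      (T.map fun x => (x : ℂ)).charpoly.IsRoot ν → ‖μ‖ = ‖ν‖)
    (F : Set (EuclideanSpace ℝ (Fin n))) (hF : IsSelfAffineZ T (↑A) F)
    (hF2 : F.Nontrivial) (m : ℕ) (hm : 2 ≤ m) (c₀ : ℝ) (hc₀ : 0 < c₀) :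
    (∃ α₁ α₂ : ℕ, PieceCountBound T F m c₀ α₁ α₂) ∧
    ((∃ Q : Matrix (Fin n) (Fin n) ℂ, IsUnit Q ∧ ∃ dv : Fin n → ℂ,
        Q⁻¹ * (T.map fun x => (x : ℂ)) * Q = Matrix.diagonal dv) →
      ∃ α₁ : ℕ, PieceCountBound T F m c₀ α₁ 0) := by
  rcases Nat.eq_zero_or_pos n with hn0 | hn
  · exfalso
    obtain ⟨x, _, y, _, hxy⟩ := hF2
    apply hxy
    subst hn0
    ext i
    exact i.elim0
  · have hFc : IsCompact F := hF.2.1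
    set Mc := T.map (fun x : ℤ => (x : ℂ)) with hMcdef
    have hsplits : Mc.charpoly.Splits := IsAlgClosed.splits _
    have hcard : Multiset.card Mc.charpoly.roots = n := by
      rw [Polynomial.splits_iff_card_roots.mp hsplits, Matrix.charpoly_natDegree_eq_dim,
        Fintype.card_fin]
    obtain ⟨μ₀, hμ₀⟩ : ∃ μ₀, μ₀ ∈ Mc.charpoly.roots :=
      Multiset.card_pos_iff_exists_mem.mp (by rw [hcard]; exact hn)
    have hμ₀root : Mc.charpoly.IsRoot μ₀ := (Polynomial.mem_roots'.mp hμ₀).2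
    set lam := ‖μ₀‖ with hlamdef
    have hlam1 : 1 < lam := hT μ₀ hμ₀root
    have hlam : 1 ≤ lam := le_of_lt hlam1
    have hroots : ∀ μ : ℂ, Mc.charpoly.IsRoot μ → ‖μ‖ = lam :=
      fun μ hμ => heq μ μ₀ hμ hμ₀root
    have hdet : |(intMat T).det| = lam ^ n := by
      rw [det_intMat_abs T]
      exact det_abs_eq Mc hroots
    constructor
    · obtain ⟨C, hC0, hCb⟩ := cpow_entry_bound hn Mc hlam (fun μ h => le_of_eq (hroots μ h))
      have hpow : ∀ (l : ℕ) (i j : Fin n),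
          |((intMat T)^l) i j| ≤ C * ((l:ℝ)+1)^(n-1) * lam^l := by
        intro l i j
        rw [pow_entry_abs T l i j]
        exact hCb l i j
      obtain ⟨α₁, h⟩ := main_count hn T F hFc m hm c₀ hc₀ lam hlam hdet (n-1) C hC0 hpow
      exact ⟨α₁, (n-1)*n*n, h⟩
    · rintro ⟨Q, hQ, dv, hdiag⟩
      obtain ⟨C, hC0, hCb⟩ := diag_pow_bound Mc (le_trans zero_le_one hlam) hroots Q hQ dv hdiag
      have hpow : ∀ (l : ℕ) (i j : Fin n),
          |((intMat T)^l) i j| ≤ C * ((l:ℝ)+1)^0 * lam^l := by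
        intro l i j
        rw [pow_entry_abs T l i j, pow_zero, mul_one]
        exact hCb l i j
      obtain ⟨α₁, h⟩ := main_count hn T F hFc m hm c₀ hc₀ lam hlam hdet 0 C hC0 hpow
      refine ⟨α₁, ?_⟩
      have h0 : 0 * n * n = 0 := by ring
      rwa [h0] at h


end FracPert
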